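/- Let f be an admissible 6-tuple. (a) If f is a trap, then its G-orbit {g(f) : g∈G} is a finite set. (b) If f is not a trap, then its G-orbit contains no trap; equivalently, every 6-tuple G-equivalent to a trap is itself a trap. -/

import Mathlib

/-!
Common setup: 6-tuples, the coloured graph Γ(f), conditions (I)–(VI),
the maps ψ₁, ψ₂, ψ₃, σ, equivalences, traps, canonical/minimal/root tuples.
-/

namespace GMN

/-- A 6-tuple `(h₀,h₁,h₂;q₀,q₁,q₂)` of integers. -/
structure Tuple where
  h0 : ℤ
  h1 : ℤ
  h2 : ℤ
  q0 : ℤ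
  q1 : ℤ
  q2 : ℤ

namespace Tuple

/-- The `h`-components indexed by `ℤ₃`. -/
def h (f : Tuple) : ZMod 3 → ℤ := fun i => if i = 0 then f.h0 else if i = 1 then f.h1 else f.h2

/-- The `q`-components indexed by `ℤ₃`. -/
def q (f : Tuple) : ZMod 3 → ℤ := fun i => if i = 0 then f.q0 else if i = 1 then f.q1 else f.q2

/-- `2lᵢ = h_{i-1} + hᵢ`. -/
def twol (f : Tuple) (i : ZMod 3) : ℤ := f.h (i - 1) + f.h i

end Tuple

/-- Condition (I): all `hᵢ` positive. -/
def CondI (f : Tuple) : Prop := ∀ i, 0 < f.h i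

/-- Condition (II): all `hᵢ` of the same parity. -/
def CondII (f : Tuple) : Prop := ∀ i j, f.h i % 2 = f.h j % 2

/-- Condition (III): `0 ≤ qᵢ < 2lᵢ`. -/
def CondIII (f : Tuple) : Prop := ∀ i, 0 ≤ f.q i ∧ f.q i < f.twol i

/-- Condition (IV): all `qᵢ` of the same parity. -/
def CondIV (f : Tuple) : Prop := ∀ i j, f.q i % 2 = f.q j % 2

/-- Conditions (I)–(IV) together. -/
def CondsI_IV (f : Tuple) : Prop := CondI f ∧ CondII f ∧ CondIII f ∧ CondIV f

/-- Condition (V): `hᵢ + qᵢ` odd. -/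
def CondV (f : Tuple) : Prop := ∀ i, (f.h i + f.q i) % 2 = 1

/-- The vertex set `V(f) = ⋃ᵢ {i} × ℤ_{2lᵢ}`, with second coordinates as least
nonnegative residues. -/
def Vtx (f : Tuple) : Set (ZMod 3 × ℤ) := {p | 0 ≤ p.2 ∧ p.2 < f.twol p.1}

/-- `ι₀(i,j) = (i, j + (−1)^j)`, second coordinate mod `2lᵢ`. -/
def iota0 (f : Tuple) (p : ZMod 3 × ℤ) : ZMod 3 × ℤ :=
  (p.1, (if p.2 % 2 = 0 then p.2 + 1 else p.2 - 1) % f.twol p.1)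

/-- `ι₁(i,j) = (i, j − (−1)^j)`, second coordinate mod `2lᵢ`. -/
def iota1 (f : Tuple) (p : ZMod 3 × ℤ) : ZMod 3 × ℤ :=
  (p.1, (if p.2 % 2 = 0 then p.2 - 1 else p.2 + 1) % f.twol p.1)

/-- `ι₂(i,j) = (i+1, −j−1)` if `0 ≤ j ≤ hᵢ−1`, and `(i−1, 2lᵢ−j−1)` if `hᵢ ≤ j ≤ 2lᵢ−1`. -/
def iota2 (f : Tuple) (p : ZMod 3 × ℤ) : ZMod 3 × ℤ :=
  if p.2 < f.h p.1 then (p.1 + 1, (-p.2 - 1) % f.twol (p.1 + 1))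
  else (p.1 - 1, (f.twol p.1 - p.2 - 1) % f.twol (p.1 - 1))

/-- `ρ(i,j) = (i, j + qᵢ)`. -/
def rho (f : Tuple) (p : ZMod 3 × ℤ) : ZMod 3 × ℤ :=
  (p.1, (p.2 + f.q p.1) % f.twol p.1)

/-- `ρ⁻¹(i,j) = (i, j − qᵢ)`. -/
def rhoInv (f : Tuple) (p : ZMod 3 × ℤ) : ZMod 3 × ℤ :=
  (p.1, (p.2 - f.q p.1) % f.twol p.1)

/-- `ι₃ = ρ ∘ ι₂ ∘ ρ⁻¹`. -/
def iota3 (f : Tuple) : ZMod 3 × ℤ → ZMod 3 × ℤ :=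
  rho f ∘ iota2 f ∘ rhoInv f

/-- The four involutions of `Γ(f)`, indexed by the colour `c ∈ {0,1,2,3}`. -/
def iota (f : Tuple) : Fin 4 → ZMod 3 × ℤ → ZMod 3 × ℤ
  | 0 => iota0 f
  | 1 => iota1 f
  | 2 => iota2 f
  | 3 => iota3 f

/-- One step along an edge of `Γ(f)` whose colour lies in `S`, within `V(f)`. -/
def Step (f : Tuple) (S : Set (Fin 4)) (a b : ZMod 3 × ℤ) : Prop :=
  a ∈ Vtx f ∧ b ∈ Vtx f ∧ ∃ c ∈ S, b = iota f c a

/-- The orbit relation on `V(f)` of the subgroup generated by the involutions with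
colours in `S` (the `S`-residue relation). -/
def OrbRel (f : Tuple) (S : Set (Fin 4)) : ZMod 3 × ℤ → ZMod 3 × ℤ → Prop :=
  Relation.EqvGen (Step f S)

/-- The subgroup generated by the colours in `S` has exactly three orbits on `V(f)`. -/
def ThreeOrbits (f : Tuple) (S : Set (Fin 4)) : Prop :=
  ∃ a b c, a ∈ Vtx f ∧ b ∈ Vtx f ∧ c ∈ Vtx f ∧
    ¬ OrbRel f S a b ∧ ¬ OrbRel f S a c ∧ ¬ OrbRel f S b c ∧
    ∀ v ∈ Vtx f, OrbRel f S a v ∨ OrbRel f S b v ∨ OrbRel f S c v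

/-- Admissibility: conditions (I)–(IV), (V), and (VI) (three `{2,3}`-residues). -/
def Admissible (f : Tuple) : Prop :=
  CondsI_IV f ∧ CondV f ∧ ThreeOrbits f {2, 3}

/-- `ψ₁(h₀,h₁,h₂;q₀,q₁,q₂) = (h₁,h₂,h₀;q₁,q₂,q₀)`. -/
def psi1 (f : Tuple) : Tuple := ⟨f.h1, f.h2, f.h0, f.q1, f.q2, f.q0⟩

/-- `ψ₂(h₀,h₁,h₂;q₀,q₁,q₂) = (h₂,h₁,h₀;q₀,q₂,q₁)`. -/
def psi2 (f : Tuple) : Tuple := ⟨f.h2, f.h1, f.h0, f.q0, f.q2, f.q1⟩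

/-- `ψ₃(h₀,h₁,h₂;q₀,q₁,q₂) = (h₀,h₁,h₂;−q₀,−q₁,−q₂)`, the `q`-entries reduced to their
least nonnegative residues mod the respective `2lᵢ`. -/
def psi3 (f : Tuple) : Tuple :=
  ⟨f.h0, f.h1, f.h2,
    (-f.q0) % (f.h2 + f.h0), (-f.q1) % (f.h0 + f.h1), (-f.q2) % (f.h1 + f.h2)⟩

/-- The 2-symmetric transformation `σ`, with the `q′`-entries reduced to their least
nonnegative residues mod the respective `2lᵢ′ = h′_{i−1} + h′ᵢ`. -/
def sigma (f : Tuple) : Tuple :=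
  if f.q0 = 0 then f
  else if f.q0 < f.h0 ∧ f.q0 < f.h2 then
    ⟨f.h0 + f.h1 - f.q0, f.q0, f.h2 + f.h1 - f.q0,
      (f.h0 + f.h1 + f.h2 - 2 * f.q0) % ((f.h2 + f.h1 - f.q0) + (f.h0 + f.h1 - f.q0)),
      (f.q0 + f.q1 + f.h1) % ((f.h0 + f.h1 - f.q0) + f.q0),
      (f.q0 + f.q2 + f.h1) % (f.q0 + (f.h2 + f.h1 - f.q0))⟩
  else if f.h0 < f.q0 ∧ f.h2 < f.q0 then
    ⟨f.q0 + f.h1 - f.h2, f.h0 + f.h2 - f.q0, f.q0 + f.h1 - f.h0,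
      f.h1 % ((f.q0 + f.h1 - f.h0) + (f.q0 + f.h1 - f.h2)),
      (f.q0 + f.q1 - f.h2) % ((f.q0 + f.h1 - f.h2) + (f.h0 + f.h2 - f.q0)),
      (f.q0 + f.q2 - f.h0) % ((f.h0 + f.h2 - f.q0) + (f.q0 + f.h1 - f.h0))⟩
  else if f.q0 < f.h2 then
    ⟨f.h1, f.h0, f.h1 + f.h2 - f.h0,
      (f.h1 + f.h2 - f.q0) % ((f.h1 + f.h2 - f.h0) + f.h1),
      f.q1 % (f.h1 + f.h0),
      (2 * f.q0 + f.q2 + f.h1 - f.h0) % (f.h0 + (f.h1 + f.h2 - f.h0))⟩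
  else
    ⟨f.h1 + f.h0 - f.h2, f.h2, f.h1,
      (f.h1 + f.h0 - f.q0) % (f.h1 + (f.h1 + f.h0 - f.h2)),
      (2 * f.q0 + f.q1 + f.h1 - f.h2) % ((f.h1 + f.h0 - f.h2) + f.h2),
      f.q2 % (f.h2 + f.h1)⟩

/-- The complexity `ν(f) = h₀ + h₁ + h₂`. -/
def nu (f : Tuple) : ℤ := f.h0 + f.h1 + f.h2

/-- `δ(f) = ν(σ(f)) − ν(f)`. -/
def delta (f : Tuple) : ℤ := nu (sigma f) - nu f

/-- One step of the action of a generator of `H` on admissible 6-tuples. -/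
def HStep (a b : Tuple) : Prop :=
  Admissible a ∧ Admissible b ∧ (b = psi1 a ∨ b = psi2 a ∨ b = psi3 a)

/-- `H`-equivalence: the orbit relation of `H = ⟨ψ₁,ψ₂,ψ₃⟩` on `ℱ`. -/
def HEquiv : Tuple → Tuple → Prop := Relation.EqvGen HStep

/-- One step of the action of a generator of `H′` on admissible 6-tuples. -/
def H'Step (a b : Tuple) : Prop :=
  Admissible a ∧ Admissible b ∧ (b = psi2 a ∨ b = psi3 a)

/-- `H′`-equivalence: the orbit relation of `H′ = ⟨ψ₂,ψ₃⟩` on `ℱ`. -/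
def H'Equiv : Tuple → Tuple → Prop := Relation.EqvGen H'Step

/-- One step of the action of a generator of `G` on admissible 6-tuples. -/
def GStep (a b : Tuple) : Prop :=
  Admissible a ∧ Admissible b ∧ (b = psi1 a ∨ b = psi2 a ∨ b = psi3 a ∨ b = sigma a)

/-- `G`-equivalence: the orbit relation of `G = ⟨ψ₁,ψ₂,ψ₃,σ⟩` on `ℱ`. -/
def GEquiv : Tuple → Tuple → Prop := Relation.EqvGen GStep

/-- Membership in the set `{0, r+1, r+2, …, s−1}`. -/
def inT (r s x : ℤ) : Prop := x = 0 ∨ (r < x ∧ x < s)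

/-- A trap of type `(r,s)`: `H`-equivalent to an admissible `(r,r,s;q₀,0,q₂)` with
`q₀+k(q₀+q₂), q₂+k(q₀+q₂) ∈ {0,r+1,…,s−1} (mod r+s)` for all `k ≥ 0`. -/
def IsTrapOfType (r s : ℤ) (f : Tuple) : Prop :=
  ∃ g : Tuple, Admissible g ∧ HEquiv f g ∧
    g.h0 = r ∧ g.h1 = r ∧ g.h2 = s ∧ g.q1 = 0 ∧
    ∀ k : ℕ, inT r s ((g.q0 + (k : ℤ) * (g.q0 + g.q2)) % (r + s)) ∧
             inT r s ((g.q2 + (k : ℤ) * (g.q0 + g.q2)) % (r + s))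

/-- A trap: a trap of some type `(r,s)` with `0 < r ≤ s`. -/
def IsTrap (f : Tuple) : Prop := ∃ r s : ℤ, 0 < r ∧ r ≤ s ∧ IsTrapOfType r s f

/-- The canonical representative conditions (a)–(i) (together with admissibility). -/
def Canonical (f : Tuple) : Prop :=
  Admissible f ∧
  (f.h0 ≤ f.h1 ∧ f.h1 ≤ f.h2) ∧
  (2 * f.q0 ≤ f.h2 + f.h0) ∧
  ((f.q0 = 0 ∨ 2 * f.q0 = f.h2 + f.h0) → 2 * f.q1 ≤ f.h0 + f.h1) ∧
  ((f.q0 = 0 ∨ 2 * f.q0 = f.h2 + f.h0) → (f.q1 = 0 ∨ 2 * f.q1 = f.h0 + f.h1) →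
    2 * f.q2 ≤ f.h1 + f.h2) ∧
  (f.h0 = f.h1 → f.q0 ≤ f.q2 ∧ f.q2 ≤ (-f.q0) % (f.h2 + f.h0)) ∧
  (f.h0 = f.h1 → (f.q2 = f.q0 ∨ f.q2 = (-f.q0) % (f.h2 + f.h0)) → f.q1 ≤ f.h1) ∧
  (f.h1 = f.h2 → f.q0 ≤ f.q1 ∧ f.q1 ≤ (-f.q0) % (f.h2 + f.h0)) ∧
  (f.h1 = f.h2 → (f.q1 = f.q0 ∨ f.q1 = (-f.q0) % (f.h2 + f.h0)) → f.q2 ≤ f.h2) ∧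
  (f.h0 = f.h1 ∧ f.h1 = f.h2 → f.q1 ≤ f.q2)

/-- A canonical 6-tuple is minimal if its complexity is minimal in its `G`-orbit. -/
def Minimal (f : Tuple) : Prop :=
  Canonical f ∧ ∀ g, GEquiv f g → nu f ≤ nu g

/-- A canonical 6-tuple is a root if every `G`-equivalent but not `H`-equivalent
6-tuple has strictly larger complexity. -/
def Root (f : Tuple) : Prop :=
  Canonical f ∧ ∀ g, GEquiv f g → ¬ HEquiv f g → nu f < nu g

/-- A colour-preserving isomorphism between `Γ(f)` and `Γ(f′)`. -/
def CPIso (f f' : Tuple) : Prop :=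
  ∃ φ : ZMod 3 × ℤ → ZMod 3 × ℤ, Set.BijOn φ (Vtx f) (Vtx f') ∧
    ∀ c : Fin 4, ∀ v ∈ Vtx f, φ (iota f c v) = iota f' c (φ v)

/-- The set of admissible 6-tuples, as a type. -/
abbrev AdmTuple := {f : Tuple // Admissible f}


/-! ### Auxiliary development -/

section Aux

private lemma zmod3_cases : ∀ i : ZMod 3, i = 0 ∨ i = 1 ∨ i = 2 := by decide

private lemma emod_fix {a m : ℤ} (h0 : 0 ≤ a) (h1 : a < m) : a % m = a :=
  Int.emod_eq_of_lt h0 h1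

private lemma add_emod_right' (a b n : ℤ) : (a + b % n) % n = (a + b) % n := by
  rw [Int.add_comm, Int.emod_add_emod, Int.add_comm]

namespace Tuple
lemma h_eval0 (f : Tuple) : f.h 0 = f.h0 := rfl
lemma h_eval1 (f : Tuple) : f.h 1 = f.h1 := rfl
lemma h_eval2 (f : Tuple) : f.h 2 = f.h2 := rfl
lemma q_eval0 (f : Tuple) : f.q 0 = f.q0 := rfl
lemma q_eval1 (f : Tuple) : f.q 1 = f.q1 := rfl
lemma q_eval2 (f : Tuple) : f.q 2 = f.q2 := rfl
lemma twol_eval0 (f : Tuple) : f.twol 0 = f.h2 + f.h0 := rfl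
lemma twol_eval1 (f : Tuple) : f.twol 1 = f.h0 + f.h1 := rfl
lemma twol_eval2 (f : Tuple) : f.twol 2 = f.h1 + f.h2 := rfl
end Tuple

lemma condI_iff (f : Tuple) : CondI f ↔ 0 < f.h0 ∧ 0 < f.h1 ∧ 0 < f.h2 := by
  constructor
  · intro h; exact ⟨h 0, h 1, h 2⟩
  · rintro ⟨a, b, c⟩ i
    rcases zmod3_cases i with h | h | h <;> subst h <;> assumption

lemma condII_iff (f : Tuple) :
    CondII f ↔ f.h0 % 2 = f.h1 % 2 ∧ f.h1 % 2 = f.h2 % 2 := by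
  constructor
  · intro h; exact ⟨h 0 1, h 1 2⟩
  · rintro ⟨a, b⟩ i j
    rcases zmod3_cases i with h | h | h <;> subst h <;>
      rcases zmod3_cases j with h' | h' | h' <;> subst h' <;>
      simp only [Tuple.h_eval0, Tuple.h_eval1, Tuple.h_eval2] <;> omega

lemma condIII_iff (f : Tuple) :
    CondIII f ↔ (0 ≤ f.q0 ∧ f.q0 < f.h2 + f.h0) ∧ (0 ≤ f.q1 ∧ f.q1 < f.h0 + f.h1) ∧
      (0 ≤ f.q2 ∧ f.q2 < f.h1 + f.h2) := by
  constructor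
  · intro h; exact ⟨h 0, h 1, h 2⟩
  · rintro ⟨a, b, c⟩ i
    rcases zmod3_cases i with h | h | h <;> subst h <;> assumption

lemma condIV_iff (f : Tuple) :
    CondIV f ↔ f.q0 % 2 = f.q1 % 2 ∧ f.q1 % 2 = f.q2 % 2 := by
  constructor
  · intro h; exact ⟨h 0 1, h 1 2⟩
  · rintro ⟨a, b⟩ i j
    rcases zmod3_cases i with h | h | h <;> subst h <;>
      rcases zmod3_cases j with h' | h' | h' <;> subst h' <;>
      simp only [Tuple.q_eval0, Tuple.q_eval1, Tuple.q_eval2] <;> omega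

lemma condV_iff (f : Tuple) :
    CondV f ↔ (f.h0 + f.q0) % 2 = 1 ∧ (f.h1 + f.q1) % 2 = 1 ∧ (f.h2 + f.q2) % 2 = 1 := by
  constructor
  · intro h; exact ⟨h 0, h 1, h 2⟩
  · rintro ⟨a, b, c⟩ i
    rcases zmod3_cases i with h | h | h <;> subst h <;> assumption

end Aux
section Psi1

lemma psi1_h (f : Tuple) : ∀ i, (psi1 f).h i = f.h (i + 1) := by
  intro i; rcases zmod3_cases i with h | h | h <;> subst h <;> rfl

lemma psi1_q (f : Tuple) : ∀ i, (psi1 f).q i = f.q (i + 1) := by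
  intro i; rcases zmod3_cases i with h | h | h <;> subst h <;> rfl

lemma psi1_twol (f : Tuple) : ∀ i, (psi1 f).twol i = f.twol (i + 1) := by
  intro i; rcases zmod3_cases i with h | h | h <;> subst h <;> rfl

private def shf (p : ZMod 3 × ℤ) : ZMod 3 × ℤ := (p.1 - 1, p.2)
private def shb (p : ZMod 3 × ℤ) : ZMod 3 × ℤ := (p.1 + 1, p.2)

private lemma shf_shb (p : ZMod 3 × ℤ) : shb (shf p) = p := by
  simp [shf, shb]
private lemma shb_shf (p : ZMod 3 × ℤ) : shf (shb p) = p := by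
  simp [shf, shb]

private lemma shf_vtx {f : Tuple} {p : ZMod 3 × ℤ} (h : p ∈ Vtx f) :
    shf p ∈ Vtx (psi1 f) := by
  obtain ⟨h1, h2⟩ := h
  refine ⟨h1, ?_⟩
  show p.2 < (psi1 f).twol (p.1 - 1)
  rw [psi1_twol, sub_add_cancel]; exact h2

private lemma shb_vtx {f : Tuple} {p : ZMod 3 × ℤ} (h : p ∈ Vtx (psi1 f)) :
    shb p ∈ Vtx f := by
  obtain ⟨h1, h2⟩ := h
  refine ⟨h1, ?_⟩
  show p.2 < f.twol (p.1 + 1)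
  rw [← psi1_twol]; exact h2

private lemma iota2_psi1 (f : Tuple) (p : ZMod 3 × ℤ) :
    iota2 (psi1 f) (shf p) = shf (iota2 f p) := by
  obtain ⟨i, j⟩ := p
  have e : i - 1 + 1 = i := sub_add_cancel _ _
  by_cases hb : j < f.h i
  · have c1 : ((i - 1 : ZMod 3), j).2 < (psi1 f).h ((i - 1 : ZMod 3), j).1 := by
      show j < (psi1 f).h (i - 1); rw [psi1_h, e]; exact hb
    have c2 : ((i : ZMod 3), j).2 < f.h ((i : ZMod 3), j).1 := hb
    dsimp only [iota2, shf]
    simp only [if_pos (show j < (psi1 f).h (i - 1) from c1), if_pos (show j < f.h i from c2)]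
    refine Prod.ext ?_ ?_
    · show i - 1 + 1 = i + 1 - 1; ring
    · show (-j - 1) % (psi1 f).twol (i - 1 + 1) = (-j - 1) % f.twol (i + 1)
      rw [psi1_twol, e]
  · have c1 : ¬ ((i - 1 : ZMod 3), j).2 < (psi1 f).h ((i - 1 : ZMod 3), j).1 := by
      show ¬ j < (psi1 f).h (i - 1); rw [psi1_h, e]; exact hb
    have c2 : ¬ ((i : ZMod 3), j).2 < f.h ((i : ZMod 3), j).1 := hb
    dsimp only [iota2, shf]
    simp only [if_neg (show ¬ j < (psi1 f).h (i - 1) from c1), if_neg (show ¬ j < f.h i from c2)]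
    refine Prod.ext rfl ?_
    show ((psi1 f).twol (i - 1) - j - 1) % (psi1 f).twol (i - 1 - 1)
        = (f.twol i - j - 1) % f.twol (i - 1)
    rw [psi1_twol, psi1_twol, e, sub_add_cancel]

private lemma rho_psi1 (f : Tuple) (p : ZMod 3 × ℤ) :
    rho (psi1 f) (shf p) = shf (rho f p) := by
  obtain ⟨i, j⟩ := p
  have e : i - 1 + 1 = i := sub_add_cancel _ _
  simp only [rho, shf]
  refine Prod.ext rfl ?_
  show (j + (psi1 f).q (i - 1)) % (psi1 f).twol (i - 1) = (j + f.q i) % f.twol i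
  rw [psi1_q, psi1_twol, e]

private lemma rhoInv_psi1 (f : Tuple) (p : ZMod 3 × ℤ) :
    rhoInv (psi1 f) (shf p) = shf (rhoInv f p) := by
  obtain ⟨i, j⟩ := p
  have e : i - 1 + 1 = i := sub_add_cancel _ _
  simp only [rhoInv, shf]
  refine Prod.ext rfl ?_
  show (j - (psi1 f).q (i - 1)) % (psi1 f).twol (i - 1) = (j - f.q i) % f.twol i
  rw [psi1_q, psi1_twol, e]

private lemma iota3_psi1 (f : Tuple) (p : ZMod 3 × ℤ) :
    iota3 (psi1 f) (shf p) = shf (iota3 f p) := by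
  simp only [iota3, Function.comp_apply]
  rw [rhoInv_psi1, iota2_psi1, rho_psi1]

/-- generic transport of `ThreeOrbits` through a vertex bijection. -/
private lemma threeOrbits_transport {f f' : Tuple}
    (φ ψ : ZMod 3 × ℤ → ZMod 3 × ℤ)
    (hφV : ∀ v ∈ Vtx f, φ v ∈ Vtx f')
    (hψV : ∀ v ∈ Vtx f', ψ v ∈ Vtx f)
    (hinv : ∀ v ∈ Vtx f, ψ (φ v) = v)
    (hinv' : ∀ v ∈ Vtx f', φ (ψ v) = v)
    (hc : ∀ v ∈ Vtx f, ∀ c ∈ ({2, 3} : Set (Fin 4)),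
      ∃ c' ∈ ({2, 3} : Set (Fin 4)), φ (iota f c v) = iota f' c' (φ v))
    (hc' : ∀ v ∈ Vtx f', ∀ c ∈ ({2, 3} : Set (Fin 4)),
      ∃ c' ∈ ({2, 3} : Set (Fin 4)), ψ (iota f' c v) = iota f c' (ψ v)) :
    ThreeOrbits f {2, 3} → ThreeOrbits f' {2, 3} := by
  have stepMap : ∀ a b, Step f {2, 3} a b → Step f' {2, 3} (φ a) (φ b) := by
    rintro a b ⟨ha, hb, c, hcm, rfl⟩
    obtain ⟨c', hcm', he⟩ := hc a ha c hcm
    exact ⟨hφV a ha, hφV _ hb, c', hcm', he⟩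
  have stepMap' : ∀ a b, Step f' {2, 3} a b → Step f {2, 3} (ψ a) (ψ b) := by
    rintro a b ⟨ha, hb, c, hcm, rfl⟩
    obtain ⟨c', hcm', he⟩ := hc' a ha c hcm
    exact ⟨hψV a ha, hψV _ hb, c', hcm', he⟩
  have orbMap : ∀ a b, OrbRel f {2, 3} a b → OrbRel f' {2, 3} (φ a) (φ b) := by
    intro a b h
    induction h with
    | rel a b h => exact Relation.EqvGen.rel _ _ (stepMap a b h)
    | refl a => exact Relation.EqvGen.refl _
    | symm a b _ ih => exact Relation.EqvGen.symm _ _ ih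
    | trans a b c _ _ ih1 ih2 => exact Relation.EqvGen.trans _ _ _ ih1 ih2
  have orbMap' : ∀ a b, OrbRel f' {2, 3} a b → OrbRel f {2, 3} (ψ a) (ψ b) := by
    intro a b h
    induction h with
    | rel a b h => exact Relation.EqvGen.rel _ _ (stepMap' a b h)
    | refl a => exact Relation.EqvGen.refl _
    | symm a b _ ih => exact Relation.EqvGen.symm _ _ ih
    | trans a b c _ _ ih1 ih2 => exact Relation.EqvGen.trans _ _ _ ih1 ih2
  rintro ⟨a, b, c, ha, hb, hcv, hab, hac, hbc, hcov⟩
  refine ⟨φ a, φ b, φ c, hφV a ha, hφV b hb, hφV c hcv, ?_, ?_, ?_, ?_⟩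
  · intro h
    have := orbMap' _ _ h
    rw [hinv a ha, hinv b hb] at this
    exact hab this
  · intro h
    have := orbMap' _ _ h
    rw [hinv a ha, hinv c hcv] at this
    exact hac this
  · intro h
    have := orbMap' _ _ h
    rw [hinv b hb, hinv c hcv] at this
    exact hbc this
  · intro v hv
    rcases hcov (ψ v) (hψV v hv) with h | h | h
    · left; have := orbMap _ _ h; rwa [hinv' v hv] at this
    · right; left; have := orbMap _ _ h; rwa [hinv' v hv] at this
    · right; right; have := orbMap _ _ h; rwa [hinv' v hv] at this

private lemma fin4_mem : ∀ c ∈ ({2, 3} : Set (Fin 4)), c = 2 ∨ c = 3 := by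
  intro c hc; rcases hc with h | h
  · left; exact h
  · right; exact h

lemma adm_psi1 {f : Tuple} (hf : Admissible f) : Admissible (psi1 f) := by
  obtain ⟨⟨h1, h2, h3, h4⟩, h5, h6⟩ := hf
  rw [condI_iff] at h1; rw [condII_iff] at h2; rw [condIII_iff] at h3
  rw [condIV_iff] at h4; rw [condV_iff] at h5
  refine ⟨⟨?_, ?_, ?_, ?_⟩, ?_, ?_⟩
  · rw [condI_iff]; exact ⟨h1.2.1, h1.2.2, h1.1⟩
  · rw [condII_iff]; simp only [psi1]; omega
  · rw [condIII_iff]; simp only [psi1]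
    refine ⟨?_, ?_, ?_⟩ <;> constructor <;> omega
  · rw [condIV_iff]; simp only [psi1]; omega
  · rw [condV_iff]; simp only [psi1]
    exact ⟨h5.2.1, h5.2.2, h5.1⟩
  · refine threeOrbits_transport shf shb (fun v hv => shf_vtx hv) (fun v hv => shb_vtx hv)
      (fun v _ => shf_shb v) (fun v _ => shb_shf v) ?_ ?_ h6
    · intro v _ c hc
      rcases fin4_mem c hc with rfl | rfl
      · exact ⟨2, Or.inl rfl, (iota2_psi1 f v).symm⟩
      · exact ⟨3, Or.inr rfl, (iota3_psi1 f v).symm⟩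
    · intro v _ c hc
      rcases fin4_mem c hc with rfl | rfl
      · refine ⟨2, Or.inl rfl, ?_⟩
        have := iota2_psi1 f (shb v)
        rw [shb_shf] at this
        show shb (iota2 (psi1 f) v) = iota2 f (shb v)
        rw [this, shf_shb]
      · refine ⟨3, Or.inr rfl, ?_⟩
        have := iota3_psi1 f (shb v)
        rw [shb_shf] at this
        show shb (iota3 (psi1 f) v) = iota3 f (shb v)
        rw [this, shf_shb]

end Psi1
section Wc

/-- The trap condition on the pair `(u,v)`. -/
def Wc (r s u v : ℤ) : Prop :=
  ∀ k : ℕ, inT r s ((u + (k : ℤ) * (u + v)) % (r + s)) ∧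
           inT r s ((v + (k : ℤ) * (u + v)) % (r + s))

lemma inT_neg {r s x : ℤ} (hr : 0 < r) (hrs : r ≤ s) (hx0 : 0 ≤ x) (hxn : x < r + s)
    (h : inT r s x) : inT r s ((-x) % (r + s)) := by
  rcases h with rfl | ⟨h1, h2⟩
  · left; simp
  · have e : (-x) % (r + s) = (r + s - x) % (r + s) := by
      rw [show r + s - x = -x + (r + s) * 1 by ring, Int.add_mul_emod_self_left]
    rw [e, emod_fix (by omega) (by omega)]
    right; omega

lemma Wc_symm {r s u v : ℤ} (h : Wc r s u v) : Wc r s v u := by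
  intro k
  have := h k
  rw [add_comm u v] at this
  exact ⟨this.2, this.1⟩

lemma Wc_int {r s u v : ℤ} (hn : 0 < r + s) (h : Wc r s u v) (k : ℤ) :
    inT r s ((u + k * (u + v)) % (r + s)) ∧ inT r s ((v + k * (u + v)) % (r + s)) := by
  set n := r + s with hn'
  have hk0 : 0 ≤ k % n := Int.emod_nonneg k (by omega)
  have h2 : k % n + n * (k / n) = k := Int.emod_add_mul_ediv k n
  have key : ∀ w : ℤ, (w + k * (u + v)) % n = (w + ((k % n).toNat : ℤ) * (u + v)) % n := by
    intro w
    rw [Int.toNat_of_nonneg hk0]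
    have e : w + k * (u + v) = w + (k % n) * (u + v) + n * ((k / n) * (u + v)) := by
      linear_combination (u + v) * h2.symm
    rw [e, show w + k % n * (u + v) + n * (k / n * (u + v))
        = w + k % n * (u + v) + (k / n * (u + v)) * n by ring, Int.add_mul_emod_self_right]
  constructor
  · rw [key u]; exact (h (k % n).toNat).1
  · rw [key v]; exact (h (k % n).toNat).2

private lemma modeq_self (n a : ℤ) : a % n ≡ a [ZMOD n] := Int.emod_emod_of_dvd a dvd_rfl

private lemma neg_term {r s u v k : ℤ} (hr : 0 < r) (hrs : r ≤ s)
    (h : inT r s ((u + k * (u + v)) % (r + s))) :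
    inT r s (((-u) % (r + s) + k * ((-u) % (r + s) + (-v) % (r + s))) % (r + s)) := by
  have ha : (-u) % (r + s) ≡ -u [ZMOD r + s] := modeq_self _ _
  have hb : (-v) % (r + s) ≡ -v [ZMOD r + s] := modeq_self _ _
  have key : ((-u) % (r + s) + k * ((-u) % (r + s) + (-v) % (r + s)))
      ≡ -(u + k * (u + v)) [ZMOD r + s] := by
    have h1 := ha.add ((ha.add hb).mul_left k)
    have e : -u + k * (-u + -v) = -(u + k * (u + v)) := by ring
    rwa [e] at h1
  have key2 : (-(u + k * (u + v))) ≡ -((u + k * (u + v)) % (r + s)) [ZMOD r + s] :=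
    Int.ModEq.neg (modeq_self _ _).symm
  have keyE : ((-u) % (r + s) + k * ((-u) % (r + s) + (-v) % (r + s))) % (r + s)
      = (-((u + k * (u + v)) % (r + s))) % (r + s) := key.trans key2
  rw [keyE]
  exact inT_neg hr hrs (Int.emod_nonneg _ (by omega)) (Int.emod_lt_of_pos _ (by omega)) h

lemma Wc_neg {r s u v : ℤ} (hr : 0 < r) (hrs : r ≤ s) (h : Wc r s u v) :
    Wc r s ((-u) % (r + s)) ((-v) % (r + s)) := by
  intro k
  constructor
  · exact neg_term hr hrs (h k).1
  · have := neg_term (u := v) (v := u) hr hrs (by rw [add_comm v u]; exact (h k).2)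
    rwa [add_comm ((-v) % (r + s)) ((-u) % (r + s))] at this

lemma Wc_shift {r s u v : ℤ} (hr : 0 < r) (hrs : r ≤ s) (h : Wc r s u v) :
    Wc r s ((r + s - u) % (r + s)) ((2 * u + v) % (r + s)) := by
  have hn : 0 < r + s := by omega
  intro k
  have ha : (r + s - u) % (r + s) ≡ -u [ZMOD r + s] := by
    have := modeq_self (r + s) (r + s - u)
    have e : (r + s - u) % (r + s) = (-u) % (r + s) := by
      rw [show r + s - u = -u + (r + s) * 1 by ring, Int.add_mul_emod_self_left]
    rw [e]; exact modeq_self _ _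
  have hb : (2 * u + v) % (r + s) ≡ 2 * u + v [ZMOD r + s] := modeq_self _ _
  have hm : ((r + s - u) % (r + s) + (2 * u + v) % (r + s)) ≡ u + v [ZMOD r + s] := by
    have := ha.add hb
    rwa [show -u + (2 * u + v) = u + v by ring] at this
  constructor
  · have key : ((r + s - u) % (r + s) + k * ((r + s - u) % (r + s) + (2 * u + v) % (r + s)))
        ≡ -(u + (-k) * (u + v)) [ZMOD r + s] := by
      have h1 := ha.add (hm.mul_left k)
      rwa [show -u + k * (u + v) = -(u + -k * (u + v)) by ring] at h1
    have key2 : (-(u + (-k) * (u + v))) ≡ -((u + (-k) * (u + v)) % (r + s)) [ZMOD r + s] :=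
      Int.ModEq.neg (modeq_self _ _).symm
    have keyE := (key.trans key2 : _ % _ = _ % _)
    rw [keyE]
    exact inT_neg hr hrs (Int.emod_nonneg _ (by omega)) (Int.emod_lt_of_pos _ hn)
      (Wc_int hn h (-k)).1
  · have key : ((2 * u + v) % (r + s) + k * ((r + s - u) % (r + s) + (2 * u + v) % (r + s)))
        ≡ u + ((k : ℤ) + 1) * (u + v) [ZMOD r + s] := by
      have h1 := hb.add (hm.mul_left k)
      rwa [show 2 * u + v + k * (u + v) = u + (k + 1) * (u + v) by ring] at h1
    have keyE := (key : _ % _ = _ % _)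
    rw [keyE]
    exact (Wc_int hn h (k + 1)).1

end Wc
section Family

/-- branch lemmas for σ -/
lemma sigma_case0 {f : Tuple} (h : f.q0 = 0) : sigma f = f := by
  unfold sigma; rw [if_pos h]

lemma sigma_case1 {f : Tuple} (h0 : ¬ f.q0 = 0) (h1 : f.q0 < f.h0 ∧ f.q0 < f.h2) :
    sigma f = ⟨f.h0 + f.h1 - f.q0, f.q0, f.h2 + f.h1 - f.q0,
      (f.h0 + f.h1 + f.h2 - 2 * f.q0) % ((f.h2 + f.h1 - f.q0) + (f.h0 + f.h1 - f.q0)),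
      (f.q0 + f.q1 + f.h1) % ((f.h0 + f.h1 - f.q0) + f.q0),
      (f.q0 + f.q2 + f.h1) % (f.q0 + (f.h2 + f.h1 - f.q0))⟩ := by
  unfold sigma; rw [if_neg h0, if_pos h1]

lemma sigma_case2 {f : Tuple} (h0 : ¬ f.q0 = 0) (h1 : ¬ (f.q0 < f.h0 ∧ f.q0 < f.h2))
    (h2 : f.h0 < f.q0 ∧ f.h2 < f.q0) :
    sigma f = ⟨f.q0 + f.h1 - f.h2, f.h0 + f.h2 - f.q0, f.q0 + f.h1 - f.h0,
      f.h1 % ((f.q0 + f.h1 - f.h0) + (f.q0 + f.h1 - f.h2)),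
      (f.q0 + f.q1 - f.h2) % ((f.q0 + f.h1 - f.h2) + (f.h0 + f.h2 - f.q0)),
      (f.q0 + f.q2 - f.h0) % ((f.h0 + f.h2 - f.q0) + (f.q0 + f.h1 - f.h0))⟩ := by
  unfold sigma; rw [if_neg h0, if_neg h1, if_pos h2]

lemma sigma_case3 {f : Tuple} (h0 : ¬ f.q0 = 0) (h1 : ¬ (f.q0 < f.h0 ∧ f.q0 < f.h2))
    (h2 : ¬ (f.h0 < f.q0 ∧ f.h2 < f.q0)) (h3 : f.q0 < f.h2) :
    sigma f = ⟨f.h1, f.h0, f.h1 + f.h2 - f.h0,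
      (f.h1 + f.h2 - f.q0) % ((f.h1 + f.h2 - f.h0) + f.h1),
      f.q1 % (f.h1 + f.h0),
      (2 * f.q0 + f.q2 + f.h1 - f.h0) % (f.h0 + (f.h1 + f.h2 - f.h0))⟩ := by
  unfold sigma; rw [if_neg h0, if_neg h1, if_neg h2, if_pos h3]

lemma sigma_case4 {f : Tuple} (h0 : ¬ f.q0 = 0) (h1 : ¬ (f.q0 < f.h0 ∧ f.q0 < f.h2))
    (h2 : ¬ (f.h0 < f.q0 ∧ f.h2 < f.q0)) (h3 : ¬ f.q0 < f.h2) :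
    sigma f = ⟨f.h1 + f.h0 - f.h2, f.h2, f.h1,
      (f.h1 + f.h0 - f.q0) % (f.h1 + (f.h1 + f.h0 - f.h2)),
      (2 * f.q0 + f.q1 + f.h1 - f.h2) % ((f.h1 + f.h0 - f.h2) + f.h2),
      f.q2 % (f.h2 + f.h1)⟩ := by
  unfold sigma; rw [if_neg h0, if_neg h1, if_neg h2, if_neg h3]

/-- The family of (raw) trap forms of type `(r,s)`. -/
def InF (r s : ℤ) (f : Tuple) : Prop :=
  ∃ x y : ℤ, 0 ≤ x ∧ x < r + s ∧ 0 ≤ y ∧ y < r + s ∧ Wc r s x y ∧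
    (f = ⟨r, r, s, x, 0, y⟩ ∨ f = ⟨r, s, r, 0, x, y⟩ ∨ f = ⟨s, r, r, x, y, 0⟩)

lemma InF_psi1 {r s : ℤ} {f : Tuple} (h : InF r s f) : InF r s (psi1 f) := by
  obtain ⟨x, y, hx0, hxn, hy0, hyn, hW, hs⟩ := h
  rcases hs with rfl | rfl | rfl
  · exact ⟨y, x, hy0, hyn, hx0, hxn, Wc_symm hW, Or.inr (Or.inl rfl)⟩
  · exact ⟨x, y, hx0, hxn, hy0, hyn, hW, Or.inr (Or.inr rfl)⟩
  · exact ⟨y, x, hy0, hyn, hx0, hxn, Wc_symm hW, Or.inl rfl⟩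

lemma InF_psi2 {r s : ℤ} {f : Tuple} (h : InF r s f) : InF r s (psi2 f) := by
  obtain ⟨x, y, hx0, hxn, hy0, hyn, hW, hs⟩ := h
  rcases hs with rfl | rfl | rfl
  · exact ⟨x, y, hx0, hxn, hy0, hyn, hW, Or.inr (Or.inr rfl)⟩
  · exact ⟨y, x, hy0, hyn, hx0, hxn, Wc_symm hW, Or.inr (Or.inl rfl)⟩
  · exact ⟨x, y, hx0, hxn, hy0, hyn, hW, Or.inl rfl⟩

lemma InF_psi3 {r s : ℤ} {f : Tuple} (hr : 0 < r) (hrs : r ≤ s) (h : InF r s f) :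
    InF r s (psi3 f) := by
  have hn : 0 < r + s := by omega
  obtain ⟨x, y, hx0, hxn, hy0, hyn, hW, hs⟩ := h
  have bx0 : 0 ≤ (-x) % (r + s) := Int.emod_nonneg _ (by omega)
  have bxn : (-x) % (r + s) < r + s := Int.emod_lt_of_pos _ hn
  have by0 : 0 ≤ (-y) % (r + s) := Int.emod_nonneg _ (by omega)
  have byn : (-y) % (r + s) < r + s := Int.emod_lt_of_pos _ hn
  rcases hs with rfl | rfl | rfl
  · refine ⟨(-x) % (r + s), (-y) % (r + s), bx0, bxn, by0, byn, Wc_neg hr hrs hW, Or.inl ?_⟩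
    show (⟨r, r, s, (-x) % (s + r), (-0) % (r + r), (-y) % (r + s)⟩ : Tuple) = _
    rw [Tuple.mk.injEq]
    refine ⟨rfl, rfl, rfl, by rw [add_comm s r], by simp, rfl⟩
  · refine ⟨(-x) % (r + s), (-y) % (r + s), bx0, bxn, by0, byn, Wc_neg hr hrs hW,
      Or.inr (Or.inl ?_)⟩
    show (⟨r, s, r, (-0) % (r + r), (-x) % (r + s), (-y) % (s + r)⟩ : Tuple) = _
    rw [Tuple.mk.injEq]
    refine ⟨rfl, rfl, rfl, by simp, rfl, by rw [add_comm s r]⟩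
  · refine ⟨(-x) % (r + s), (-y) % (r + s), bx0, bxn, by0, byn, Wc_neg hr hrs hW,
      Or.inr (Or.inr ?_)⟩
    show (⟨s, r, r, (-x) % (r + s), (-y) % (s + r), (-0) % (r + r)⟩ : Tuple) = _
    rw [Tuple.mk.injEq]
    refine ⟨rfl, rfl, rfl, rfl, by rw [add_comm s r], by simp⟩

lemma psi1_cube (f : Tuple) : psi1 (psi1 (psi1 f)) = f := rfl

lemma psi2_sq (f : Tuple) : psi2 (psi2 f) = f := rfl

private lemma neg_neg_emod {a m : ℤ} (h0 : 0 < m) (h1 : 0 ≤ a) (h2 : a < m) :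
    (-((-a) % m)) % m = a := by
  have e : (-((-a) % m)) % m = (-(-a)) % m := Int.ModEq.neg (modeq_self m (-a))
  rw [e, neg_neg, emod_fix h1 h2]

lemma psi3_sq {f : Tuple} (hI : CondI f) (hIII : CondIII f) : psi3 (psi3 f) = f := by
  rw [condI_iff] at hI; rw [condIII_iff] at hIII
  obtain ⟨a, b, c, d, e, g⟩ := f
  simp only [psi3, Tuple.mk.injEq] at *
  refine ⟨trivial, trivial, trivial, ?_, ?_, ?_⟩
  · exact neg_neg_emod (by omega) (by omega) (by omega)
  · exact neg_neg_emod (by omega) (by omega) (by omega)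
  · exact neg_neg_emod (by omega) (by omega) (by omega)

lemma InF_HEquiv {r s : ℤ} {a b : Tuple} (hr : 0 < r) (hrs : r ≤ s) (h : HEquiv a b) :
    InF r s a ↔ InF r s b := by
  induction h with
  | rel a b h =>
    obtain ⟨ha, hb, ho⟩ := h
    rcases ho with rfl | rfl | rfl
    · constructor
      · exact InF_psi1
      · intro hb'
        have := InF_psi1 (InF_psi1 hb')
        rwa [psi1_cube] at this
    · constructor
      · exact InF_psi2
      · intro hb'
        have := InF_psi2 hb'
        rwa [psi2_sq] at this
    · constructor
      · exact InF_psi3 hr hrs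
      · intro hb'
        have := InF_psi3 hr hrs hb'
        rwa [psi3_sq ha.1.1 ha.1.2.2.1] at this
  | refl a => exact Iff.rfl
  | symm a b _ ih => exact ih.symm
  | trans a b c _ _ ih1 ih2 => exact ih1.trans ih2

lemma nu_InF {r s : ℤ} {f : Tuple} (h : InF r s f) : nu f = r + r + s := by
  obtain ⟨x, y, _, _, _, _, _, hs⟩ := h
  rcases hs with rfl | rfl | rfl <;> simp only [nu] <;> ring

end Family
section TrapFamily

lemma trap_of_InF {r s : ℤ} {f : Tuple} (hr : 0 < r) (hrs : r ≤ s)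
    (h : InF r s f) (ha : Admissible f) : IsTrap f := by
  refine ⟨r, s, hr, hrs, ?_⟩
  obtain ⟨x, y, hx0, hxn, hy0, hyn, hW, hs⟩ := h
  rcases hs with rfl | rfl | rfl
  · exact ⟨_, ha, Relation.EqvGen.refl _, rfl, rfl, rfl, rfl, hW⟩
  · -- shape B: two ψ₁ steps lead to shape A
    set f : Tuple := ⟨r, s, r, 0, x, y⟩ with hf
    have ha1 : Admissible (psi1 f) := adm_psi1 ha
    have ha2 : Admissible (psi1 (psi1 f)) := adm_psi1 ha1
    refine ⟨psi1 (psi1 f), ha2, ?_, rfl, rfl, rfl, rfl, Wc_symm hW⟩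
    exact Relation.EqvGen.trans _ _ _
      (Relation.EqvGen.rel _ _ ⟨ha, ha1, Or.inl rfl⟩)
      (Relation.EqvGen.rel _ _ ⟨ha1, ha2, Or.inl rfl⟩)
  · -- shape C: one ψ₁ step leads to shape A
    set f : Tuple := ⟨s, r, r, x, y, 0⟩ with hf
    have ha1 : Admissible (psi1 f) := adm_psi1 ha
    refine ⟨psi1 f, ha1, Relation.EqvGen.rel _ _ ⟨ha, ha1, Or.inl rfl⟩,
      rfl, rfl, rfl, rfl, Wc_symm hW⟩

lemma IsTrap_InF {f : Tuple} (ha : Admissible f) (ht : IsTrap f) :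
    ∃ r s : ℤ, 0 < r ∧ r ≤ s ∧ InF r s f := by
  obtain ⟨r, s, hr, hrs, g, hg, heq, e0, e1, e2, e3, hW⟩ := ht
  refine ⟨r, s, hr, hrs, (InF_HEquiv hr hrs heq).mpr ?_⟩
  have hIII := hg.1.2.2.1
  rw [condIII_iff] at hIII
  refine ⟨g.q0, g.q2, hIII.1.1, by omega, hIII.2.2.1, by omega, hW, Or.inl ?_⟩
  have : g = ⟨g.h0, g.h1, g.h2, g.q0, g.q1, g.q2⟩ := rfl
  rw [this, e0, e1, e2, e3]

lemma sigma_InF {r s : ℤ} {f : Tuple} (hr : 0 < r) (hrs : r ≤ s) (h : InF r s f) :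
    InF r s (sigma f) := by
  have hn : 0 < r + s := by omega
  obtain ⟨x, y, hx0, hxn, hy0, hyn, hW, hs⟩ := h
  have hxT : inT r s x := by
    have := (hW 0).1
    rw [show ((0 : ℕ) : ℤ) * (x + y) = 0 by push_cast; ring, add_zero, emod_fix hx0 hxn] at this
    exact this
  have bx0 : 0 ≤ (r + s - x) % (r + s) := Int.emod_nonneg _ (by omega)
  have bxn : (r + s - x) % (r + s) < r + s := Int.emod_lt_of_pos _ hn
  have by0 : 0 ≤ (2 * x + y) % (r + s) := Int.emod_nonneg _ (by omega)
  have byn : (2 * x + y) % (r + s) < r + s := Int.emod_lt_of_pos _ hn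
  rcases hs with rfl | rfl | rfl
  · by_cases hx : x = 0
    · subst hx
      rw [sigma_case0 rfl]
      exact ⟨0, y, le_refl 0, by omega, hy0, hyn, hW, Or.inl rfl⟩
    · have hxT' : r < x ∧ x < s := by
        rcases hxT with h | h
        · exact absurd h hx
        · exact h
      rw [sigma_case3 (f := ⟨r, r, s, x, 0, y⟩) hx
        (by show ¬ (x < r ∧ x < s); omega)
        (by show ¬ (r < x ∧ s < x); omega) (by show x < s; omega)]
      refine ⟨(r + s - x) % (r + s), (2 * x + y) % (r + s), bx0, bxn, by0, byn,
        Wc_shift hr hrs hW, Or.inl ?_⟩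
      show (⟨r, r, r + s - r, (r + s - x) % ((r + s - r) + r), 0 % (r + r),
        (2 * x + y + r - r) % (r + (r + s - r))⟩ : Tuple) = _
      rw [Tuple.mk.injEq]
      refine ⟨rfl, rfl, by omega, ?_, by simp, ?_⟩
      · congr 1; omega
      · congr 1; omega; omega
  · rw [sigma_case0 rfl]
    exact ⟨x, y, hx0, hxn, hy0, hyn, hW, Or.inr (Or.inl rfl)⟩
  · by_cases hx : x = 0
    · subst hx
      rw [sigma_case0 rfl]
      exact ⟨0, y, le_refl 0, by omega, hy0, hyn, hW, Or.inr (Or.inr rfl)⟩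
    · have hxT' : r < x ∧ x < s := by
        rcases hxT with h | h
        · exact absurd h hx
        · exact h
      rw [sigma_case4 (f := ⟨s, r, r, x, y, 0⟩) hx
        (by show ¬ (x < s ∧ x < r); omega)
        (by show ¬ (s < x ∧ r < x); omega) (by show ¬ x < r; omega)]
      refine ⟨(r + s - x) % (r + s), (2 * x + y) % (r + s), bx0, bxn, by0, byn,
        Wc_shift hr hrs hW, Or.inr (Or.inr ?_)⟩
      show (⟨r + s - r, r, r, (r + s - x) % (r + (r + s - r)),
        (2 * x + y + r - r) % ((r + s - r) + r), 0 % (r + r)⟩ : Tuple) = _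
      rw [Tuple.mk.injEq]
      refine ⟨by omega, rfl, rfl, ?_, ?_, by simp⟩
      · congr 1; omega
      · congr 1; omega; omega

end TrapFamily
section Involution

private lemma emod_shift_fix {X m t v : ℤ} (k : ℤ) (h1 : X + t = v + m * k) (h2 : 0 ≤ v)
    (h3 : v < m) : (X % m + t) % m = v := by
  rw [Int.emod_add_emod, h1, Int.add_mul_emod_self_left, emod_fix h2 h3]

lemma sigma_sigma {f : Tuple} (hI : CondI f) (hII : CondII f) (hIII : CondIII f)
    (hV : CondV f) : sigma (sigma f) = f := by
  rw [condI_iff] at hI; rw [condII_iff] at hII; rw [condIII_iff] at hIII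
  rw [condV_iff] at hV
  obtain ⟨a, b, c, d, e, g⟩ := f
  have hI' : 0 < a ∧ 0 < b ∧ 0 < c := hI
  have hII' : a % 2 = b % 2 ∧ b % 2 = c % 2 := hII
  have hIII' : (0 ≤ d ∧ d < c + a) ∧ (0 ≤ e ∧ e < a + b) ∧ (0 ≤ g ∧ g < b + c) := hIII
  have hV' : (a + d) % 2 = 1 ∧ (b + e) % 2 = 1 ∧ (c + g) % 2 = 1 := hV
  clear hI hII hIII hV
  have hda : d ≠ a := by omega
  have hdc : d ≠ c := by omega
  by_cases hd : d = 0
  · have hd' : (⟨a, b, c, d, e, g⟩ : Tuple).q0 = 0 := hd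
    rw [sigma_case0 hd', sigma_case0 hd']
  · rcases lt_or_gt_of_ne hda with hlta | hgta <;> rcases lt_or_gt_of_ne hdc with hltc | hgtc
    · -- Case 1 : d < a, d < c
      rw [sigma_case1 (f := ⟨a, b, c, d, e, g⟩) hd ⟨hlta, hltc⟩]
      show sigma ⟨a + b - d, d, c + b - d,
        (a + b + c - 2 * d) % ((c + b - d) + (a + b - d)),
        (d + e + b) % ((a + b - d) + d),
        (d + g + b) % (d + (c + b - d))⟩ = ⟨a, b, c, d, e, g⟩
      rw [show (a + b + c - 2 * d) % ((c + b - d) + (a + b - d)) = a + b + c - 2 * d from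
        emod_fix (by omega) (by omega)]
      rw [sigma_case2 (f := ⟨a + b - d, d, c + b - d, a + b + c - 2 * d,
          (d + e + b) % ((a + b - d) + d), (d + g + b) % (d + (c + b - d))⟩)
        (show ¬ a + b + c - 2 * d = 0 by omega)
        (show ¬ (a + b + c - 2 * d < a + b - d ∧ a + b + c - 2 * d < c + b - d) by omega)
        (show a + b - d < a + b + c - 2 * d ∧ c + b - d < a + b + c - 2 * d by omega)]
      show (⟨a + b + c - 2 * d + d - (c + b - d),
        (a + b - d) + (c + b - d) - (a + b + c - 2 * d),
        a + b + c - 2 * d + d - (a + b - d),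
        d % ((a + b + c - 2 * d + d - (a + b - d)) + (a + b + c - 2 * d + d - (c + b - d))),
        (a + b + c - 2 * d + (d + e + b) % ((a + b - d) + d) - (c + b - d)) %
          ((a + b + c - 2 * d + d - (c + b - d)) + ((a + b - d) + (c + b - d) - (a + b + c - 2 * d))),
        (a + b + c - 2 * d + (d + g + b) % (d + (c + b - d)) - (a + b - d)) %
          (((a + b - d) + (c + b - d) - (a + b + c - 2 * d)) + (a + b + c - 2 * d + d - (a + b - d)))⟩ : Tuple)
        = ⟨a, b, c, d, e, g⟩
      rw [Tuple.mk.injEq]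
      refine ⟨by omega, by omega, by omega, ?_, ?_, ?_⟩
      · rw [show (a + b + c - 2 * d + d - (a + b - d)) + (a + b + c - 2 * d + d - (c + b - d))
          = c + a by ring]
        exact emod_fix (by omega) (by omega)
      · rw [show (a + b + c - 2 * d + d - (c + b - d)) + ((a + b - d) + (c + b - d) - (a + b + c - 2 * d)) = a + b by ring,
          show (a + b - d) + d = a + b by ring,
          show a + b + c - 2 * d + (d + e + b) % (a + b) - (c + b - d)
            = (d + e + b) % (a + b) + (a - d) by ring]
        exact emod_shift_fix 1 (by omega) (by omega) (by omega)
      · rw [show ((a + b - d) + (c + b - d) - (a + b + c - 2 * d)) + (a + b + c - 2 * d + d - (a + b - d)) = b + c by ring,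
          show d + (c + b - d) = b + c by ring,
          show a + b + c - 2 * d + (d + g + b) % (b + c) - (a + b - d)
            = (d + g + b) % (b + c) + (c - d) by ring]
        exact emod_shift_fix 1 (by omega) (by omega) (by omega)
    · -- Case 4 : c < d < a
      rw [sigma_case4 (f := ⟨a, b, c, d, e, g⟩) hd
        (show ¬ (d < a ∧ d < c) by omega) (show ¬ (a < d ∧ c < d) by omega)
        (show ¬ d < c by omega)]
      show sigma ⟨b + a - c, c, b,
        (b + a - d) % (b + (b + a - c)),
        (2 * d + e + b - c) % ((b + a - c) + c),
        g % (c + b)⟩ = ⟨a, b, c, d, e, g⟩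
      rw [show (b + a - d) % (b + (b + a - c)) = b + a - d from emod_fix (by omega) (by omega)]
      rw [sigma_case4 (f := ⟨b + a - c, c, b, b + a - d,
          (2 * d + e + b - c) % ((b + a - c) + c), g % (c + b)⟩)
        (show ¬ b + a - d = 0 by omega)
        (show ¬ (b + a - d < b + a - c ∧ b + a - d < b) by omega)
        (show ¬ (b + a - c < b + a - d ∧ b < b + a - d) by omega)
        (show ¬ b + a - d < b by omega)]
      show (⟨c + (b + a - c) - b, b, c,
        (c + (b + a - c) - (b + a - d)) % (c + (c + (b + a - c) - b)),
        (2 * (b + a - d) + (2 * d + e + b - c) % ((b + a - c) + c) + c - b) %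
          ((c + (b + a - c) - b) + b),
        g % (c + b) % (b + c)⟩ : Tuple) = ⟨a, b, c, d, e, g⟩
      rw [Tuple.mk.injEq]
      refine ⟨by omega, rfl, rfl, ?_, ?_, ?_⟩
      · rw [show c + (c + (b + a - c) - b) = c + a by ring,
          show c + (b + a - c) - (b + a - d) = d by ring]
        exact emod_fix (by omega) (by omega)
      · rw [show (c + (b + a - c) - b) + b = a + b by ring,
          show (b + a - c) + c = a + b by ring,
          show 2 * (b + a - d) + (2 * d + e + b - c) % (a + b) + c - b
            = (2 * d + e + b - c) % (a + b) + (b + 2 * a - 2 * d + c) by ring]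
        exact emod_shift_fix 2 (by omega) (by omega) (by omega)
      · rw [show c + b = b + c by ring, Int.emod_emod_of_dvd g dvd_rfl]
        exact emod_fix (by omega) (by omega)
    · -- Case 3 : a < d < c
      rw [sigma_case3 (f := ⟨a, b, c, d, e, g⟩) hd
        (show ¬ (d < a ∧ d < c) by omega) (show ¬ (a < d ∧ c < d) by omega)
        (show d < c by omega)]
      show sigma ⟨b, a, b + c - a,
        (b + c - d) % ((b + c - a) + b),
        e % (b + a),
        (2 * d + g + b - a) % (a + (b + c - a))⟩ = ⟨a, b, c, d, e, g⟩
      rw [show (b + c - d) % ((b + c - a) + b) = b + c - d from emod_fix (by omega) (by omega)]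
      rw [sigma_case3 (f := ⟨b, a, b + c - a, b + c - d, e % (b + a),
          (2 * d + g + b - a) % (a + (b + c - a))⟩)
        (show ¬ b + c - d = 0 by omega)
        (show ¬ (b + c - d < b ∧ b + c - d < b + c - a) by omega)
        (show ¬ (b < b + c - d ∧ b + c - a < b + c - d) by omega)
        (show b + c - d < b + c - a by omega)]
      show (⟨a, b, a + (b + c - a) - b,
        (a + (b + c - a) - (b + c - d)) % ((a + (b + c - a) - b) + a),
        e % (b + a) % (a + b),
        (2 * (b + c - d) + (2 * d + g + b - a) % (a + (b + c - a)) + a - b) %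
          (b + (a + (b + c - a) - b))⟩ : Tuple) = ⟨a, b, c, d, e, g⟩
      rw [Tuple.mk.injEq]
      refine ⟨rfl, rfl, by omega, ?_, ?_, ?_⟩
      · rw [show (a + (b + c - a) - b) + a = c + a by ring,
          show a + (b + c - a) - (b + c - d) = d by ring]
        exact emod_fix (by omega) (by omega)
      · rw [show b + a = a + b by ring, Int.emod_emod_of_dvd e dvd_rfl]
        exact emod_fix (by omega) (by omega)
      · rw [show b + (a + (b + c - a) - b) = b + c by ring,
          show a + (b + c - a) = b + c by ring,
          show 2 * (b + c - d) + (2 * d + g + b - a) % (b + c) + a - b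
            = (2 * d + g + b - a) % (b + c) + (b + 2 * c - 2 * d + a) by ring]
        exact emod_shift_fix 2 (by omega) (by omega) (by omega)
    · -- Case 2 : a < d, c < d
      rw [sigma_case2 (f := ⟨a, b, c, d, e, g⟩) hd
        (show ¬ (d < a ∧ d < c) by omega) (show a < d ∧ c < d by omega)]
      show sigma ⟨d + b - c, a + c - d, d + b - a,
        b % ((d + b - a) + (d + b - c)),
        (d + e - c) % ((d + b - c) + (a + c - d)),
        (d + g - a) % ((a + c - d) + (d + b - a))⟩ = ⟨a, b, c, d, e, g⟩
      rw [show b % ((d + b - a) + (d + b - c)) = b from emod_fix (by omega) (by omega)]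
      rw [sigma_case1 (f := ⟨d + b - c, a + c - d, d + b - a, b,
          (d + e - c) % ((d + b - c) + (a + c - d)),
          (d + g - a) % ((a + c - d) + (d + b - a))⟩)
        (show ¬ b = 0 by omega)
        (show b < d + b - c ∧ b < d + b - a by omega)]
      show (⟨(d + b - c) + (a + c - d) - b, b, (d + b - a) + (a + c - d) - b,
        ((d + b - c) + (a + c - d) + (d + b - a) - 2 * b) %
          (((d + b - a) + (a + c - d) - b) + ((d + b - c) + (a + c - d) - b)),
        (b + (d + e - c) % ((d + b - c) + (a + c - d)) + (a + c - d)) %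
          (((d + b - c) + (a + c - d) - b) + b),
        (b + (d + g - a) % ((a + c - d) + (d + b - a)) + (a + c - d)) %
          (b + ((d + b - a) + (a + c - d) - b))⟩ : Tuple) = ⟨a, b, c, d, e, g⟩
      rw [Tuple.mk.injEq]
      refine ⟨by omega, rfl, by omega, ?_, ?_, ?_⟩
      · rw [show ((d + b - a) + (a + c - d) - b) + ((d + b - c) + (a + c - d) - b) = c + a by ring,
          show (d + b - c) + (a + c - d) + (d + b - a) - 2 * b = d by ring]
        exact emod_fix (by omega) (by omega)
      · rw [show ((d + b - c) + (a + c - d) - b) + b = a + b by ring,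
          show (d + b - c) + (a + c - d) = a + b by ring,
          show b + (d + e - c) % (a + b) + (a + c - d)
            = (d + e - c) % (a + b) + (b + a + c - d) by ring]
        exact emod_shift_fix 1 (by omega) (by omega) (by omega)
      · rw [show b + ((d + b - a) + (a + c - d) - b) = b + c by ring,
          show (a + c - d) + (d + b - a) = b + c by ring,
          show b + (d + g - a) % (b + c) + (a + c - d)
            = (d + g - a) % (b + c) + (b + a + c - d) by ring]
        exact emod_shift_fix 1 (by omega) (by omega) (by omega)

end Involution
section Assembly

lemma key_step {a b : Tuple} (h : GStep a b) :
    (IsTrap a ↔ IsTrap b) ∧ (IsTrap a → nu a = nu b) := by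
  obtain ⟨ha, hb, ho⟩ := h
  have psiCase : ∀ c : Tuple, (c = psi1 a ∨ c = psi2 a ∨ c = psi3 a) → Admissible c →
      (IsTrap a ↔ IsTrap c) := by
    intro c hc hca
    have hst : HStep a c := ⟨ha, hca, hc⟩
    constructor
    · rintro ⟨r, s, hr, hrs, g, hg, heq, rest⟩
      exact ⟨r, s, hr, hrs, g, hg, Relation.EqvGen.trans _ _ _
        (Relation.EqvGen.symm _ _ (Relation.EqvGen.rel _ _ hst)) heq, rest⟩
    · rintro ⟨r, s, hr, hrs, g, hg, heq, rest⟩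
      exact ⟨r, s, hr, hrs, g, hg, Relation.EqvGen.trans _ _ _
        (Relation.EqvGen.rel _ _ hst) heq, rest⟩
  rcases ho with rfl | rfl | rfl | rfl
  · exact ⟨psiCase _ (Or.inl rfl) hb, fun _ => by simp only [nu, psi1]; ring⟩
  · exact ⟨psiCase _ (Or.inr (Or.inl rfl)) hb, fun _ => by simp only [nu, psi2]; ring⟩
  · exact ⟨psiCase _ (Or.inr (Or.inr rfl)) hb, fun _ => by simp only [nu, psi3]⟩
  · constructor
    · constructor
      · intro hta
        obtain ⟨r, s, hr, hrs, hF⟩ := IsTrap_InF ha hta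
        exact trap_of_InF hr hrs (sigma_InF hr hrs hF) hb
      · intro htb
        obtain ⟨r, s, hr, hrs, hF⟩ := IsTrap_InF hb htb
        have hsig : sigma (sigma a) = a := sigma_sigma ha.1.1 ha.1.2.1 ha.1.2.2.1 ha.2.1
        have h2 := sigma_InF hr hrs hF
        rw [hsig] at h2
        exact trap_of_InF hr hrs h2 ha
    · intro hta
      obtain ⟨r, s, hr, hrs, hF⟩ := IsTrap_InF ha hta
      rw [nu_InF hF, nu_InF (sigma_InF hr hrs hF)]

lemma gequiv_R {a b : Tuple} (h : GEquiv a b) :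
    (IsTrap a ↔ IsTrap b) ∧ (IsTrap a → nu a = nu b) ∧
      (a = b ∨ (Admissible a ∧ Admissible b)) := by
  induction h with
  | rel a b h => exact ⟨(key_step h).1, (key_step h).2, Or.inr ⟨h.1, h.2.1⟩⟩
  | refl a => exact ⟨Iff.rfl, fun _ => rfl, Or.inl rfl⟩
  | symm a b _ ih =>
      refine ⟨ih.1.symm, fun htb => (ih.2.1 (ih.1.mpr htb)).symm, ?_⟩
      rcases ih.2.2 with heq | ⟨h1, h2⟩
      · exact Or.inl heq.symm
      · exact Or.inr ⟨h2, h1⟩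
  | trans a b c _ _ ih1 ih2 =>
      refine ⟨ih1.1.trans ih2.1, fun hta => (ih1.2.1 hta).trans (ih2.2.1 (ih1.1.mp hta)), ?_⟩
      rcases ih1.2.2 with heq | ⟨h1, h2⟩
      · rw [heq]; exact ih2.2.2
      · rcases ih2.2.2 with heq' | ⟨h3, h4⟩
        · rw [← heq']; exact Or.inr ⟨h1, h2⟩
        · exact Or.inr ⟨h1, h4⟩

lemma finite_box (N : ℤ) : {g : Tuple | Admissible g ∧ nu g = N}.Finite := by
  have hfin : (Set.Icc (1:ℤ) N ×ˢ Set.Icc (1:ℤ) N ×ˢ Set.Icc (1:ℤ) N ×ˢ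
      Set.Icc (0:ℤ) (2*N) ×ˢ Set.Icc (0:ℤ) (2*N) ×ˢ Set.Icc (0:ℤ) (2*N)).Finite :=
    (Set.finite_Icc _ _).prod ((Set.finite_Icc _ _).prod ((Set.finite_Icc _ _).prod
      ((Set.finite_Icc _ _).prod ((Set.finite_Icc _ _).prod (Set.finite_Icc _ _)))))
  refine (hfin.image (fun p : ℤ × ℤ × ℤ × ℤ × ℤ × ℤ =>
    Tuple.mk p.1 p.2.1 p.2.2.1 p.2.2.2.1 p.2.2.2.2.1 p.2.2.2.2.2)).subset ?_
  rintro g ⟨hadm, hnu⟩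
  have hI := hadm.1.1; rw [condI_iff] at hI
  have hIII := hadm.1.2.2.1; rw [condIII_iff] at hIII
  have hnu' : g.h0 + g.h1 + g.h2 = N := hnu
  refine ⟨(g.h0, g.h1, g.h2, g.q0, g.q1, g.q2), ?_, rfl⟩
  simp only [Set.mem_prod, Set.mem_Icc]
  omega

end Assembly

/-- (a) the `G`-orbit of a trap is finite; (b) the `G`-orbit of a
non-trap contains no trap. -/
theorem stmt_14 (f : Tuple) (hf : Admissible f) :
    (IsTrap f → {g : Tuple | GEquiv f g}.Finite) ∧
    (¬ IsTrap f → ∀ g : Tuple, GEquiv f g → ¬ IsTrap g) := by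
  constructor
  · intro htrap
    have hsub : {g : Tuple | GEquiv f g} ⊆
        {g : Tuple | Admissible g ∧ nu g = nu f} ∪ {f} := by
      intro g hg
      obtain ⟨hiff, hnu, hor⟩ := gequiv_R hg
      rcases hor with heq | ⟨h1, h2⟩
      · right; exact heq.symm
      · left; exact ⟨h2, (hnu htrap).symm⟩
    exact ((finite_box (nu f)).union (Set.finite_singleton f)).subset hsub
  · intro hnt g hg htg
    exact hnt ((gequiv_R hg).1.mpr htg)

end GMN
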